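/- Let V′₁, V′₂, V″₁, V″₂ be finite-dimensional complex vector spaces with V′₁ ⊕ V′₂ ≠ 0 and V″₁ ⊕ V″₂ ≠ 0, let c′ : V′₂ → V′₁ and c″ : V″₂ → V″₁ be linear maps, and let f : Hom(V″₁,V′₁) ⊕ Hom(V″₂,V′₂) → Hom(V″₂,V′₁) be the linear map f(ψ₁,ψ₂) = c′ ∘ ψ₂ − ψ₁ ∘ c″. If f is a linear isomorphism, then exactly one of the following three alternatives occurs: (1) V′₁ = 0, V″₂ = 0, c′ = 0 and c″ = 0; (2) V″₁ = 0, the spaces V′₁, V′₂, V″₂ are all nonzero, and c′ : V′₂ → V′₁ is an isomorphism; (3) V′₂ = 0, the spaces V′₁, V″₁, V″₂ are all nonzero, and c″ : V″₂ → V″₁ is an isomorphism. -/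

import Mathlib

/-- From a nonzero vector we can hit any target with a linear map. -/
private lemma exists_map_apply_eq {M N : Type*} [AddCommGroup M] [Module ℂ M]
    [FiniteDimensional ℂ M] [AddCommGroup N] [Module ℂ N] {m : M} (hm : m ≠ 0) (n : N) :
    ∃ g : M →ₗ[ℂ] N, g m = n := by
  have h : ¬ ∀ φ : Module.Dual ℂ M, φ m = 0 := by
    simpa [Module.forall_dual_apply_eq_zero_iff ℂ m] using hm
  push_neg at h
  obtain ⟨φ, hφ⟩ := h
  refine ⟨((φ m)⁻¹ • φ).smulRight n, ?_⟩
  simp [smul_smul, inv_mul_cancel₀ hφ]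

private lemma exists_map_ne_zero {M N : Type*} [AddCommGroup M] [Module ℂ M]
    [FiniteDimensional ℂ M] [AddCommGroup N] [Module ℂ N] [Nontrivial M] [Nontrivial N] :
    ∃ g : M →ₗ[ℂ] N, g ≠ 0 := by
  obtain ⟨m, hm⟩ := exists_ne (0 : M)
  obtain ⟨n, hn⟩ := exists_ne (0 : N)
  obtain ⟨g, hg⟩ := exists_map_apply_eq hm n
  exact ⟨g, fun h => hn (by simpa [h] using hg.symm)⟩

private lemma nontrivial_left_of_prod {α β : Type*} [Subsingleton β] (h : Nontrivial (α × β)) :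
    Nontrivial α := by
  obtain ⟨x, y, hxy⟩ := h
  exact ⟨x.1, y.1, fun h1 => hxy (Prod.ext h1 (Subsingleton.elim _ _))⟩

private lemma nontrivial_right_of_prod {α β : Type*} [Subsingleton α] (h : Nontrivial (α × β)) :
    Nontrivial β := by
  obtain ⟨x, y, hxy⟩ := h
  exact ⟨x.2, y.2, fun h2 => hxy (Prod.ext (Subsingleton.elim _ _) h2)⟩

theorem linear_algebra_lemma_trichotomy
    (V'₁ V'₂ V''₁ V''₂ : Type*)
    [AddCommGroup V'₁] [Module ℂ V'₁] [FiniteDimensional ℂ V'₁]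
    [AddCommGroup V'₂] [Module ℂ V'₂] [FiniteDimensional ℂ V'₂]
    [AddCommGroup V''₁] [Module ℂ V''₁] [FiniteDimensional ℂ V''₁]
    [AddCommGroup V''₂] [Module ℂ V''₂] [FiniteDimensional ℂ V''₂]
    (hV' : Nontrivial (V'₁ × V'₂)) (hV'' : Nontrivial (V''₁ × V''₂))
    (c' : V'₂ →ₗ[ℂ] V'₁) (c'' : V''₂ →ₗ[ℂ] V''₁)
    (hf : Function.Bijective
      (fun p : (V''₁ →ₗ[ℂ] V'₁) × (V''₂ →ₗ[ℂ] V'₂) => c' ∘ₗ p.2 - p.1 ∘ₗ c'')) :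
    let A := Subsingleton V'₁ ∧ Subsingleton V''₂ ∧ c' = 0 ∧ c'' = 0
    let B := Subsingleton V''₁ ∧ Nontrivial V'₁ ∧ Nontrivial V'₂ ∧ Nontrivial V''₂ ∧
      Function.Bijective c'
    let C := Subsingleton V'₂ ∧ Nontrivial V'₁ ∧ Nontrivial V''₁ ∧ Nontrivial V''₂ ∧
      Function.Bijective c''
    (A ∧ ¬B ∧ ¬C) ∨ (¬A ∧ B ∧ ¬C) ∨ (¬A ∧ ¬B ∧ C) := by
  intro A B C
  -- kernel fact from injectivity of `f`
  have hker : ∀ (ψ₁ : V''₁ →ₗ[ℂ] V'₁) (ψ₂ : V''₂ →ₗ[ℂ] V'₂),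
      c' ∘ₗ ψ₂ - ψ₁ ∘ₗ c'' = 0 → ψ₁ = 0 ∧ ψ₂ = 0 := by
    intro ψ₁ ψ₂ h
    have h0 : (fun p : (V''₁ →ₗ[ℂ] V'₁) × (V''₂ →ₗ[ℂ] V'₂) => c' ∘ₗ p.2 - p.1 ∘ₗ c'')
        (ψ₁, ψ₂) = (fun p : (V''₁ →ₗ[ℂ] V'₁) × (V''₂ →ₗ[ℂ] V'₂) =>
        c' ∘ₗ p.2 - p.1 ∘ₗ c'') (0, 0) := by
      simpa using h
    have := hf.injective h0
    exact ⟨congrArg Prod.fst this, congrArg Prod.snd this⟩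
  by_cases hq : Subsingleton V''₂
  · -- Case A : `V''₂ = 0`
    haveI := hq
    haveI hp : Nontrivial V''₁ := nontrivial_left_of_prod hV''
    have hc'' : c'' = 0 := Subsingleton.elim _ _
    have hV1 : Subsingleton V'₁ := by
      by_contra hV1
      rw [not_subsingleton_iff_nontrivial] at hV1
      haveI := hV1
      obtain ⟨ψ₁, hψ₁⟩ := exists_map_ne_zero (M := V''₁) (N := V'₁)
      exact hψ₁ (hker ψ₁ 0 (by simp [hc''])).1
    haveI := hV1
    have hc' : c' = 0 := Subsingleton.elim _ _
    refine Or.inl ⟨⟨hV1, hq, hc', hc''⟩, fun hB => ?_, fun hC => ?_⟩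
    · exact (not_nontrivial_iff_subsingleton.mpr hq) hB.2.2.2.1
    · exact (not_nontrivial_iff_subsingleton.mpr hq) hC.2.2.2.1
  · rw [not_subsingleton_iff_nontrivial] at hq
    haveI := hq
    -- `V'₁` is nontrivial
    have hV1 : Nontrivial V'₁ := by
      by_contra hV1
      rw [not_nontrivial_iff_subsingleton] at hV1
      haveI := hV1
      haveI hV2 : Nontrivial V'₂ := nontrivial_right_of_prod hV'
      obtain ⟨ψ₂, hψ₂⟩ := exists_map_ne_zero (M := V''₂) (N := V'₂)
      exact hψ₂ (hker 0 ψ₂ (by simp [Subsingleton.elim (c' ∘ₗ ψ₂) 0])).2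
    haveI := hV1
    -- `c''` is surjective
    have hsurj'' : Function.Surjective c'' := by
      rw [← LinearMap.range_eq_top]
      by_contra hr
      have hlt : LinearMap.range c'' < ⊤ := lt_top_iff_ne_top.mpr hr
      haveI : Nontrivial (V''₁ ⧸ LinearMap.range c'') :=
        Submodule.Quotient.nontrivial_iff.mpr hlt.ne
      obtain ⟨g, hg⟩ := exists_map_ne_zero (M := V''₁ ⧸ LinearMap.range c'') (N := V'₁)
      have hcomp : (g ∘ₗ (LinearMap.range c'').mkQ) ∘ₗ c'' = 0 := by
        ext x
        have h0 : (LinearMap.range c'').mkQ (c'' x) = 0 :=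
          (Submodule.Quotient.mk_eq_zero _).mpr ⟨x, rfl⟩
        simp [LinearMap.comp_apply, h0]
      have hne : g ∘ₗ (LinearMap.range c'').mkQ ≠ 0 := by
        intro h0
        apply hg
        ext x
        simpa using DFunLike.congr_fun h0 x
      exact hne (hker (g ∘ₗ (LinearMap.range c'').mkQ) 0 (by simp [hcomp])).1
    -- `c'` is injective
    have hinj' : Function.Injective c' := by
      rw [← LinearMap.ker_eq_bot]
      by_contra hk
      haveI : Nontrivial (LinearMap.ker c') := Submodule.nontrivial_iff_ne_bot.mpr hk
      obtain ⟨g, hg⟩ := exists_map_ne_zero (M := V''₂) (N := LinearMap.ker c')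
      set ψ₂ := (LinearMap.ker c').subtype ∘ₗ g with hψ₂def
      have hcomp : c' ∘ₗ ψ₂ = 0 := by
        ext x
        simp only [hψ₂def, LinearMap.comp_apply, Submodule.coe_subtype, LinearMap.zero_apply]
        exact LinearMap.mem_ker.mp (g x).2
      have hne : ψ₂ ≠ 0 := by
        intro h0
        apply hg
        ext x
        have hx := DFunLike.congr_fun h0 x
        simpa [hψ₂def] using hx
      exact hne (hker 0 ψ₂ (by simp [hcomp])).2
    by_cases hp : Subsingleton V''₁
    · -- Case B : `c'` bijective
      haveI := hp
      have hsurj' : Function.Surjective c' := by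
        intro v
        obtain ⟨x, hx⟩ := exists_ne (0 : V''₂)
        obtain ⟨θ, hθ⟩ := exists_map_apply_eq hx v
        obtain ⟨⟨ψ₁, ψ₂⟩, hp2⟩ := hf.surjective θ
        have hp2' : c' ∘ₗ ψ₂ - ψ₁ ∘ₗ c'' = θ := hp2
        refine ⟨ψ₂ x, ?_⟩
        have hc'' : c'' = 0 := Subsingleton.elim _ _
        have hcθ : c' ∘ₗ ψ₂ = θ := by simpa [hc''] using hp2'
        calc c' (ψ₂ x) = (c' ∘ₗ ψ₂) x := rfl
          _ = θ x := by rw [hcθ]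
          _ = v := hθ
      have hV2 : Nontrivial V'₂ := by
        by_contra h2
        rw [not_nontrivial_iff_subsingleton] at h2
        obtain ⟨v, hv⟩ := exists_ne (0 : V'₁)
        obtain ⟨w, hw⟩ := hsurj' v
        exact hv (by rw [← hw, Subsingleton.elim w 0, map_zero])
      refine Or.inr (Or.inl ⟨fun hA => ?_, ⟨hp, hV1, hV2, hq, hinj', hsurj'⟩, fun hC => ?_⟩)
      · exact (not_subsingleton_iff_nontrivial.mpr hV1) hA.1
      · exact (not_subsingleton_iff_nontrivial.mpr hV2) hC.1
    · rw [not_subsingleton_iff_nontrivial] at hp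
      haveI := hp
      -- `V'₂` must be trivial
      have hV2 : Subsingleton V'₂ := by
        by_contra h2
        rw [not_subsingleton_iff_nontrivial] at h2
        haveI := h2
        obtain ⟨φ, hφ⟩ := exists_map_ne_zero (M := V''₁) (N := V'₂)
        have h0 : c' ∘ₗ (φ ∘ₗ c'') - (c' ∘ₗ φ) ∘ₗ c'' = 0 := by
          rw [LinearMap.comp_assoc, sub_self]
        have hφc : φ ∘ₗ c'' = 0 := (hker (c' ∘ₗ φ) (φ ∘ₗ c'') h0).2
        apply hφ
        ext y
        obtain ⟨x, rfl⟩ := hsurj'' y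
        exact DFunLike.congr_fun hφc x
      haveI := hV2
      -- Case C : `c''` bijective
      have hinj'' : Function.Injective c'' := by
        rw [← LinearMap.ker_eq_bot, Submodule.eq_bot_iff]
        intro x hx
        by_contra hx0
        obtain ⟨v, hv⟩ := exists_ne (0 : V'₁)
        obtain ⟨θ, hθ⟩ := exists_map_apply_eq hx0 v
        obtain ⟨⟨ψ₁, ψ₂⟩, hp2⟩ := hf.surjective θ
        have hp2' : c' ∘ₗ ψ₂ - ψ₁ ∘ₗ c'' = θ := hp2
        have hv0 : θ x = 0 := by
          rw [← hp2']
          have hx' : c'' x = 0 := LinearMap.mem_ker.mp hx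
          simp [LinearMap.sub_apply, LinearMap.comp_apply, hx',
            Subsingleton.elim (ψ₂ x) 0]
        exact hv (by rw [← hθ, hv0])
      refine Or.inr (Or.inr ⟨fun hA => ?_, fun hB => ?_, ⟨hV2, hV1, hp, hq, hinj'', hsurj''⟩⟩)
      · exact (not_subsingleton_iff_nontrivial.mpr hV1) hA.1
      · exact (not_nontrivial_iff_subsingleton.mpr hV2) hB.2.2.1
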